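/- Define the bounded sequence y : ℕ → ℝ by y_k = 2 if there exists an integer n ≥ 1 with 2^n ≤ k ≤ 2^n + n, and y_k = 1 otherwise. Then the Cesàro means (Cy)_n converge to 1 as n → ∞, but y is not almost convergent; in particular there exists a Banach limit B with B(y) ≠ 1. -/

import Mathlib

open scoped BigOperators

/-- Membership in `l_∞`: the sequence is bounded. -/
def Bdd (x : ℕ → ℝ) : Prop := ∃ M : ℝ, ∀ n : ℕ, |x n| ≤ M

/-- The right shift `S` on sequences: `(Sx)_0 = 0`, `(Sx)_{n+1} = x_n`. -/
def Sfun (x : ℕ → ℝ) : ℕ → ℝ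
  | 0 => 0
  | n + 1 => x n

/-- `B` is a Banach limit on `l_∞`: a positive, normalised, shift-invariant linear
functional. -/
def IsBanachLimit (B : (ℕ → ℝ) → ℝ) : Prop :=
  (∀ x y : ℕ → ℝ, Bdd x → Bdd y → B (x + y) = B x + B y) ∧
  (∀ (c : ℝ) (x : ℕ → ℝ), Bdd x → B (c • x) = c * B x) ∧
  (∀ x : ℕ → ℝ, Bdd x → 0 ≤ x → 0 ≤ B x) ∧
  B (fun _ => (1 : ℝ)) = 1 ∧
  (∀ x : ℕ → ℝ, Bdd x → B (Sfun x) = B x)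

/-- The Cesàro operator `C` on sequences: `(Cx)_n = (1/(n+1)) Σ_{k=0}^n x_k`. -/
noncomputable def Ces (x : ℕ → ℝ) : ℕ → ℝ := fun n =>
  (∑ k ∈ Finset.range (n + 1), x k) / ((n : ℝ) + 1)

open scoped Classical in
/-- The sequence `y` equal to `2` on the blocks `[2^n, 2^n + n]` (`n ≥ 1`) and `1`
elsewhere. -/
noncomputable def yseq : ℕ → ℝ := fun k =>
  if ∃ n : ℕ, 1 ≤ n ∧ 2 ^ n ≤ k ∧ k ≤ 2 ^ n + n then 2 else 1

/- ### auxiliary -/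

noncomputable def Ufil : Ultrafilter ℕ := Ultrafilter.of Filter.atTop

lemma Ufil_le : (Ufil : Filter ℕ) ≤ Filter.atTop := Ultrafilter.of_le _

noncomputable def BL (A : ℕ → (ℕ → ℝ) → ℝ) (x : ℕ → ℝ) : ℝ :=
  Filter.limUnder (Ufil : Filter ℕ) (fun m => A m x)

lemma BL_tendsto (A : ℕ → (ℕ → ℝ) → ℝ) (x : ℕ → ℝ) (M : ℝ) (h : ∀ m, |A m x| ≤ M) :
    Filter.Tendsto (fun m => A m x) (Ufil : Filter ℕ) (nhds (BL A x)) := by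
  obtain ⟨a, -, hle⟩ := (isCompact_Icc (a := -M) (b := M)).ultrafilter_le_nhds
    (Ufil.map (fun m => A m x)) (by
      rw [Ultrafilter.coe_map, Filter.le_principal_iff, Filter.mem_map]
      refine Filter.univ_mem' (fun m => ?_)
      exact Set.mem_Icc.2 (abs_le.mp (h m)))
  rw [Ultrafilter.coe_map] at hle
  have ht : Filter.Tendsto (fun m => A m x) (Ufil : Filter ℕ) (nhds a) := hle
  rwa [BL, ht.limUnder_eq]

lemma BL_eq (A : ℕ → (ℕ → ℝ) → ℝ) (x : ℕ → ℝ) (a : ℝ)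
    (h : Filter.Tendsto (fun m => A m x) Filter.atTop (nhds a)) : BL A x = a :=
  (h.mono_left Ufil_le).limUnder_eq

lemma BL_isBanachLimit (A : ℕ → (ℕ → ℝ) → ℝ)
    (hM : ∀ (x : ℕ → ℝ) (M : ℝ), (∀ n, |x n| ≤ M) → ∀ m, |A m x| ≤ M)
    (hadd : ∀ (m : ℕ) (x y : ℕ → ℝ), A m (x + y) = A m x + A m y)
    (hsmul : ∀ (m : ℕ) (c : ℝ) (x : ℕ → ℝ), A m (c • x) = c * A m x)
    (hpos : ∀ (m : ℕ) (x : ℕ → ℝ), 0 ≤ x → 0 ≤ A m x)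
    (hone : ∀ m : ℕ, A m (fun _ => 1) = 1)
    (hshift : ∀ x : ℕ → ℝ, Bdd x →
      Filter.Tendsto (fun m => A m (Sfun x) - A m x) Filter.atTop (nhds 0)) :
    IsBanachLimit (BL A) := by
  refine ⟨?_, ?_, ?_, ?_, ?_⟩
  · rintro x y ⟨Mx, hx⟩ ⟨My, hy⟩
    have htx := BL_tendsto A x Mx (hM x Mx hx)
    have hty := BL_tendsto A y My (hM y My hy)
    have hxy : ∀ n, |(x + y) n| ≤ Mx + My := fun n =>
      (abs_add_le _ _).trans (add_le_add (hx n) (hy n))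
    have ht := BL_tendsto A (x + y) (Mx + My) (hM _ _ hxy)
    have ht2 : Filter.Tendsto (fun m => A m (x + y)) (Ufil : Filter ℕ)
        (nhds (BL A x + BL A y)) := by
      simpa only [hadd] using htx.add hty
    exact tendsto_nhds_unique ht ht2
  · rintro c x ⟨Mx, hx⟩
    have htx := BL_tendsto A x Mx (hM x Mx hx)
    have hcx : ∀ n, |(c • x) n| ≤ |c| * Mx := fun n => by
      simp only [Pi.smul_apply, smul_eq_mul, abs_mul]
      exact mul_le_mul_of_nonneg_left (hx n) (abs_nonneg c)
    have ht := BL_tendsto A (c • x) (|c| * Mx) (hM _ _ hcx)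
    have ht2 : Filter.Tendsto (fun m => A m (c • x)) (Ufil : Filter ℕ)
        (nhds (c * BL A x)) := by
      simpa only [hsmul] using htx.const_mul c
    exact tendsto_nhds_unique ht ht2
  · rintro x ⟨Mx, hx⟩ hx0
    exact ge_of_tendsto' (BL_tendsto A x Mx (hM x Mx hx)) (fun m => hpos m x hx0)
  · refine BL_eq A _ 1 ?_
    simpa only [hone] using (tendsto_const_nhds : Filter.Tendsto (fun _ : ℕ => (1:ℝ)) _ _)
  · rintro x ⟨Mx, hx⟩
    have hM0 : 0 ≤ Mx := (abs_nonneg _).trans (hx 0)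
    have hSx : ∀ n, |Sfun x n| ≤ Mx := by
      intro n
      cases n with
      | zero => simpa [Sfun] using hM0
      | succ n => exact hx n
    have htx := BL_tendsto A x Mx (hM x Mx hx)
    have htS := BL_tendsto A (Sfun x) Mx (hM _ Mx hSx)
    have hd : Filter.Tendsto (fun m => A m (Sfun x) - A m x) (Ufil : Filter ℕ) (nhds 0) :=
      (hshift x ⟨Mx, hx⟩).mono_left Ufil_le
    have ht2 : Filter.Tendsto (fun m => A m (Sfun x)) (Ufil : Filter ℕ) (nhds (0 + BL A x)) := by
      simpa only [sub_add_cancel] using hd.add htx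
    rw [zero_add] at ht2
    exact tendsto_nhds_unique htS ht2

/- ### window averages -/

noncomputable def Awin (s : ℕ → ℕ) : ℕ → (ℕ → ℝ) → ℝ := fun m x =>
  (∑ k ∈ Finset.range (m + 1), x (s m + k)) / ((m : ℝ) + 1)

lemma m1_pos (m : ℕ) : (0:ℝ) < (m : ℝ) + 1 := by positivity

lemma Awin_bdd (s : ℕ → ℕ) (x : ℕ → ℝ) (M : ℝ) (hx : ∀ n, |x n| ≤ M) (m : ℕ) :
    |Awin s m x| ≤ M := by
  have h1 : |∑ k ∈ Finset.range (m + 1), x (s m + k)| ≤ ((m : ℝ) + 1) * M := by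
    refine (Finset.abs_sum_le_sum_abs _ _).trans ?_
    have := Finset.sum_le_card_nsmul (Finset.range (m + 1)) (fun k => |x (s m + k)|) M
      (fun k _ => hx _)
    simpa [Finset.card_range, nsmul_eq_mul, mul_comm] using this
  rw [Awin, abs_div, abs_of_pos (m1_pos m), div_le_iff₀ (m1_pos m)]
  linarith [h1]

lemma Awin_add (s : ℕ → ℕ) (m : ℕ) (x y : ℕ → ℝ) :
    Awin s m (x + y) = Awin s m x + Awin s m y := by
  simp [Awin, Finset.sum_add_distrib, add_div]

lemma Awin_smul (s : ℕ → ℕ) (m : ℕ) (c : ℝ) (x : ℕ → ℝ) :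
    Awin s m (c • x) = c * Awin s m x := by
  simp only [Awin, Pi.smul_apply, smul_eq_mul, ← Finset.mul_sum, mul_div_assoc]

lemma Awin_pos (s : ℕ → ℕ) (m : ℕ) (x : ℕ → ℝ) (hx : (0 : ℕ → ℝ) ≤ x) :
    0 ≤ Awin s m x := by
  refine div_nonneg (Finset.sum_nonneg fun k _ => hx _) (le_of_lt (m1_pos m))

lemma Awin_one (s : ℕ → ℕ) (m : ℕ) : Awin s m (fun _ => 1) = 1 := by
  simp [Awin, Finset.sum_const, Finset.card_range, nsmul_eq_mul]
  exact ne_of_gt (m1_pos m)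

lemma sum_window_succ (x : ℕ → ℝ) (t m : ℕ) :
    ∑ k ∈ Finset.range (m + 1), x (t + k)
      = x t + ∑ k ∈ Finset.range m, x (t + 1 + k) := by
  rw [Finset.sum_range_succ', add_comm]
  congr 1
  refine Finset.sum_congr rfl fun k _ => ?_
  congr 1
  omega

lemma sum_shift_diff (x : ℕ → ℝ) (M : ℝ) (hx : ∀ n, |x n| ≤ M) (s m : ℕ) :
    |∑ k ∈ Finset.range (m + 1), Sfun x (s + k)
      - ∑ k ∈ Finset.range (m + 1), x (s + k)| ≤ 2 * M := by
  have hM0 : 0 ≤ M := (abs_nonneg _).trans (hx 0)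
  cases s with
  | zero =>
    have h1 : ∑ k ∈ Finset.range (m + 1), Sfun x (0 + k)
        = ∑ k ∈ Finset.range m, x k := by
      rw [Finset.sum_congr rfl (fun k _ => by rw [Nat.zero_add]), Finset.sum_range_succ']
      simp [Sfun]
    have h2 : ∑ k ∈ Finset.range (m + 1), x (0 + k)
        = ∑ k ∈ Finset.range m, x k + x m := by
      rw [Finset.sum_congr rfl (fun k _ => by rw [Nat.zero_add]), Finset.sum_range_succ]
    rw [h1, h2]
    have := hx m
    rw [abs_sub_comm]
    calc |∑ k ∈ Finset.range m, x k + x m - ∑ k ∈ Finset.range m, x k| = |x m| := by ring_nf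
    _ ≤ 2 * M := by rw [abs_le] at this ⊢; constructor <;> linarith [this.1, this.2]
  | succ t =>
    have h1 : ∑ k ∈ Finset.range (m + 1), Sfun x (t + 1 + k)
        = ∑ k ∈ Finset.range (m + 1), x (t + k) := by
      refine Finset.sum_congr rfl fun k _ => ?_
      have : t + 1 + k = (t + k) + 1 := by omega
      rw [this, Sfun]
    have h2 := sum_window_succ x t m
    have h3 : ∑ k ∈ Finset.range (m + 1), x (t + 1 + k)
        = ∑ k ∈ Finset.range m, x (t + 1 + k) + x (t + 1 + m) :=
      Finset.sum_range_succ _ _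
    rw [h1, h2, h3]
    have ha := hx t
    have hb := hx (t + 1 + m)
    rw [abs_le] at ha hb ⊢
    constructor <;> [nlinarith [ha.1, hb.2]; nlinarith [ha.2, hb.1]]

lemma Awin_shift (s : ℕ → ℕ) (x : ℕ → ℝ) (hx : Bdd x) :
    Filter.Tendsto (fun m => Awin s m (Sfun x) - Awin s m x) Filter.atTop (nhds 0) := by
  obtain ⟨M, hM⟩ := hx
  have hM0 : 0 ≤ M := (abs_nonneg _).trans (hM 0)
  have hbound : ∀ m : ℕ, ‖Awin s m (Sfun x) - Awin s m x‖ ≤ (2 * M) / ((m : ℝ) + 1) := by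
    intro m
    have : Awin s m (Sfun x) - Awin s m x
        = (∑ k ∈ Finset.range (m + 1), Sfun x (s m + k)
            - ∑ k ∈ Finset.range (m + 1), x (s m + k)) / ((m : ℝ) + 1) := by
      rw [Awin, Awin, div_sub_div_same]
    rw [Real.norm_eq_abs, this, abs_div, abs_of_pos (m1_pos m)]
    exact (div_le_div_iff_of_pos_right (m1_pos m)).mpr (sum_shift_diff x M hM (s m) m)
  have hg : Filter.Tendsto (fun m : ℕ => (2 * M) / ((m : ℝ) + 1)) Filter.atTop (nhds 0) := by
    have := tendsto_one_div_add_atTop_nhds_zero_nat (𝕜 := ℝ)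
    have h2 := this.const_mul (2 * M)
    simpa only [mul_one_div, mul_zero] using h2
  exact squeeze_zero_norm hbound hg

lemma Awin_isBanachLimit (s : ℕ → ℕ) : IsBanachLimit (BL (Awin s)) :=
  BL_isBanachLimit (Awin s) (fun x M hx m => Awin_bdd s x M hx m)
    (Awin_add s) (Awin_smul s) (Awin_pos s) (Awin_one s) (Awin_shift s)

/- ### analysis of yseq -/

open scoped Classical in
noncomputable def Pblk : ℕ → Prop := fun k => ∃ n : ℕ, 1 ≤ n ∧ 2 ^ n ≤ k ∧ k ≤ 2 ^ n + n

open scoped Classical in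
lemma yseq_eq (k : ℕ) : yseq k = 1 + (if Pblk k then (1:ℝ) else 0) := by
  by_cases h : ∃ n : ℕ, 1 ≤ n ∧ 2 ^ n ≤ k ∧ k ≤ 2 ^ n + n <;>
    simp [yseq, Pblk, h] <;> norm_num

lemma Bdd_yseq : Bdd yseq := by
  refine ⟨2, fun n => ?_⟩
  rw [yseq]
  split <;> rw [abs_of_pos] <;> norm_num

open scoped Classical in
lemma yseq_sum (m : ℕ) :
    ∑ k ∈ Finset.range (m + 1), yseq k
      = ((m : ℝ) + 1) + ((Finset.range (m + 1)).filter Pblk).card := by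
  rw [Finset.sum_congr rfl (fun k _ => yseq_eq k), Finset.sum_add_distrib,
    Finset.sum_const, Finset.card_range, Finset.sum_boole]
  ring

open scoped Classical in
lemma card_bound (m : ℕ) :
    ((Finset.range (m + 1)).filter Pblk).card ≤ (Nat.log 2 m + 2) ^ 2 := by
  set L := Nat.log 2 m with hL
  have hsub : (Finset.range (m + 1)).filter Pblk
      ⊆ (Finset.Icc 1 L).biUnion (fun n => Finset.Icc (2 ^ n) (2 ^ n + n)) := by
    intro k hk
    rw [Finset.mem_filter, Finset.mem_range] at hk
    obtain ⟨hkm, n, hn1, hn2, hn3⟩ := hk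
    rw [Finset.mem_biUnion]
    have hm0 : m ≠ 0 := by
      have h2 : 2 ≤ 2 ^ n := by
        calc 2 = 2 ^ 1 := rfl
        _ ≤ 2 ^ n := Nat.pow_le_pow_right (by norm_num) hn1
      omega
    have hnL : n ≤ L := by
      rw [hL, Nat.le_log_iff_pow_le (by norm_num) hm0]
      omega
    exact ⟨n, Finset.mem_Icc.2 ⟨hn1, hnL⟩, Finset.mem_Icc.2 ⟨hn2, hn3⟩⟩
  calc ((Finset.range (m + 1)).filter Pblk).card
      ≤ ((Finset.Icc 1 L).biUnion (fun n => Finset.Icc (2 ^ n) (2 ^ n + n))).card :=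
        Finset.card_le_card hsub
    _ ≤ ∑ n ∈ Finset.Icc 1 L, (Finset.Icc (2 ^ n) (2 ^ n + n)).card :=
        Finset.card_biUnion_le
    _ ≤ ∑ n ∈ Finset.Icc 1 L, (L + 1) := by
        refine Finset.sum_le_sum fun n hn => ?_
        rw [Nat.card_Icc]
        have := (Finset.mem_Icc.1 hn).2
        omega
    _ = L * (L + 1) := by rw [Finset.sum_const, Nat.card_Icc]; simp [Nat.smul_one_eq_cast]
    _ ≤ (L + 2) ^ 2 := by nlinarith

lemma two_pow_log_le (m : ℕ) : 2 ^ Nat.log 2 m ≤ m + 1 := by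
  rcases Nat.eq_zero_or_pos m with h | h
  · simp [h]
  · exact (Nat.pow_log_le_self 2 ((by omega : m ≠ 0))).trans (Nat.le_succ m)

lemma log_tendsto : Filter.Tendsto (Nat.log 2) Filter.atTop Filter.atTop := by
  rw [Filter.tendsto_atTop_atTop]
  intro b
  refine ⟨2 ^ b, fun m hm => ?_⟩
  have hm0 : m ≠ 0 := by
    have : 1 ≤ 2 ^ b := Nat.one_le_two_pow
    omega
  exact (Nat.le_log_iff_pow_le (by norm_num) hm0).2 hm

lemma gfun_tendsto :
    Filter.Tendsto (fun L : ℕ => ((L : ℝ) + 2) ^ 2 / 2 ^ L) Filter.atTop (nhds 0) := by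
  have base := tendsto_pow_const_div_const_pow_of_one_lt 2 (by norm_num : (1:ℝ) < 2)
  have comp := base.comp (Filter.tendsto_add_atTop_nat 2)
  have h4 := comp.const_mul (4 : ℝ)
  rw [mul_zero] at h4
  refine h4.congr fun L => ?_
  show 4 * (((L + 2 : ℕ) : ℝ) ^ 2 / 2 ^ (L + 2)) = ((L : ℝ) + 2) ^ 2 / 2 ^ L
  push_cast
  rw [pow_add]
  have : (2:ℝ) ^ L ≠ 0 := by positivity
  field_simp
  ring

open scoped Classical in
lemma ces_sub_one (m : ℕ) :
    Ces yseq m - 1 = (((Finset.range (m + 1)).filter Pblk).card : ℝ) / ((m : ℝ) + 1) := by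
  rw [Ces, yseq_sum, add_div, div_self (ne_of_gt (m1_pos m))]
  ring

lemma ces_tendsto : Filter.Tendsto (Ces yseq) Filter.atTop (nhds 1) := by
  classical
  have hub : ∀ m : ℕ, Ces yseq m - 1
      ≤ ((Nat.log 2 m : ℝ) + 2) ^ 2 / 2 ^ (Nat.log 2 m) := by
    intro m
    rw [ces_sub_one]
    refine div_le_div₀ (by positivity) ?_ (by positivity) ?_
    · have h := card_bound m
      calc (((Finset.range (m + 1)).filter Pblk).card : ℝ)
          ≤ ((Nat.log 2 m + 2) ^ 2 : ℕ) := by exact_mod_cast h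
        _ = ((Nat.log 2 m : ℝ) + 2) ^ 2 := by push_cast; ring
    · have h := two_pow_log_le m
      calc (2:ℝ) ^ Nat.log 2 m = ((2 ^ Nat.log 2 m : ℕ) : ℝ) := by push_cast; ring
        _ ≤ ((m + 1 : ℕ) : ℝ) := by exact_mod_cast h
        _ = (m : ℝ) + 1 := by push_cast; ring
  have hlb : ∀ m : ℕ, 0 ≤ Ces yseq m - 1 := by
    intro m
    rw [ces_sub_one]
    positivity
  have hsq : Filter.Tendsto (fun m => Ces yseq m - 1) Filter.atTop (nhds 0) :=
    squeeze_zero hlb hub (gfun_tendsto.comp log_tendsto)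
  have := hsq.add_const 1
  rw [zero_add] at this
  refine this.congr fun m => by ring

/- ### evaluations -/

lemma A0_eq_ces (x : ℕ → ℝ) (m : ℕ) : Awin (fun _ => 0) m x = Ces x m := by
  rw [Awin, Ces]
  congr 1
  exact Finset.sum_congr rfl fun k _ => by rw [Nat.zero_add]

lemma BL_A0_yseq : BL (Awin (fun _ => 0)) yseq = 1 := by
  refine BL_eq _ _ 1 ?_
  refine ces_tendsto.congr fun m => (A0_eq_ces yseq m).symm

lemma A1_yseq (m : ℕ) (hm : 1 ≤ m) : Awin (fun j => 2 ^ j) m yseq = 2 := by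
  have hval : ∀ k ∈ Finset.range (m + 1), yseq (2 ^ m + k) = 2 := by
    intro k hk
    rw [Finset.mem_range] at hk
    rw [yseq, if_pos]
    exact ⟨m, hm, Nat.le_add_right _ _, by omega⟩
  rw [Awin, Finset.sum_congr rfl hval, Finset.sum_const, Finset.card_range, nsmul_eq_mul]
  push_cast
  field_simp

lemma BL_A1_yseq : BL (Awin (fun j => 2 ^ j)) yseq = 2 := by
  refine BL_eq _ _ 2 ?_
  have hc : Filter.Tendsto (fun _ : ℕ => (2:ℝ)) Filter.atTop (nhds 2) := tendsto_const_nhds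
  refine Filter.Tendsto.congr' ?_ hc
  filter_upwards [Filter.eventually_ge_atTop 1] with m hm
  exact (A1_yseq m hm).symm

/-- The Cesàro means of `y` converge to `1`, but `y` is not almost convergent; in
particular there is a Banach limit `B` with `B(y) ≠ 1`. -/
theorem stmt_16 :
    Filter.Tendsto (Ces yseq) Filter.atTop (nhds 1) ∧
    (¬ ∃ a : ℝ, ∀ B : (ℕ → ℝ) → ℝ, IsBanachLimit B → B yseq = a) ∧
    (∃ B : (ℕ → ℝ) → ℝ, IsBanachLimit B ∧ B yseq ≠ 1) := by
  refine ⟨ces_tendsto, ?_, ?_⟩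
  · rintro ⟨a, ha⟩
    have h0 := ha _ (Awin_isBanachLimit (fun _ => 0))
    have h1 := ha _ (Awin_isBanachLimit (fun j => 2 ^ j))
    rw [BL_A0_yseq] at h0
    rw [BL_A1_yseq] at h1
    linarith
  · exact ⟨BL (Awin (fun j => 2 ^ j)), Awin_isBanachLimit _, by rw [BL_A1_yseq]; norm_num⟩
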